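/- Let x_k ∈ ℝⁿ, let Ĥ_k = B_k + (L_H + c + μ₁·min{1, ‖G(x_k)‖^δ})·I where B_k is symmetric positive semidefinite, c > 0, μ₁ ∈ (0,1], μ₂ ∈ (0, μ₁], δ ∈ [0,1], and let x_{k+1} be the minimizer of x ↦ f(x_k) + ⟨∇f(x_k), x − x_k⟩ + g(x) + (1/2)⟨x − x_k, Ĥ_k(x − x_k)⟩ + ⟨ε_k, x − x_k⟩ with ‖ε_k‖ ≤ (μ₂/2)·min{1, ‖G(x_k)‖^δ}·‖x_{k+1} − x_k‖. Then φ(x_k) − φ(x_{k+1}) ≥ (1/2)·(c + (μ₁ − μ₂)·min{1, ‖G(x_k)‖^δ})·‖x_{k+1} − x_k‖²; in particular φ(x_k) − φ(x_{k+1}) ≥ (c/2)·‖x_{k+1} − x_k‖². -/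

import Mathlib

open scoped RealInnerProductSpace

lemma descent_lemma {n : ℕ} (f : EuclideanSpace ℝ (Fin n) → ℝ)
    (hf : Differentiable ℝ f) (LH : ℝ) (hLH : 0 ≤ LH)
    (hlip : ∀ u v, ‖gradient f u - gradient f v‖ ≤ LH * ‖u - v‖)
    (x y : EuclideanSpace ℝ (Fin n)) :
    f y ≤ f x + ⟪gradient f x, y - x⟫ + LH / 2 * ‖y - x‖ ^ 2 := by
  set s := y - x with hs
  have hgc : Continuous (gradient f) := by
    have : LipschitzWith (Real.toNNReal LH) (gradient f) := by
      refine LipschitzWith.of_dist_le_mul fun u v => ?_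
      simpa [dist_eq_norm, Real.coe_toNNReal LH hLH] using hlip u v
    exact this.continuous
  have hline : ∀ t : ℝ, HasDerivAt (fun t : ℝ => f (x + t • s))
      (⟪gradient f (x + t • s), s⟫) t := by
    intro t
    have h1 : HasDerivAt (fun t : ℝ => x + t • s) s t := by
      simpa using ((hasDerivAt_id t).smul_const s).const_add x
    have h2 := ((hf (x + t • s)).hasGradientAt).hasFDerivAt
    have := h2.comp_hasDerivAt t h1
    simp [InnerProductSpace.toDual_apply_apply] at this ⊢; exact this
  have hcont : Continuous fun t : ℝ => ⟪gradient f (x + t • s), s⟫ := by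
    exact (hgc.comp (by continuity)).inner continuous_const
  have hint : ∫ t in (0:ℝ)..1, ⟪gradient f (x + t • s), s⟫
      = f (x + (1:ℝ) • s) - f (x + (0:ℝ) • s) := by
    exact intervalIntegral.integral_eq_sub_of_hasDerivAt
      (fun t _ => hline t) (hcont.intervalIntegrable 0 1)
  have hxy : x + (1:ℝ) • s = y := by simp [hs]
  have hx0 : x + (0:ℝ) • s = x := by simp
  have hbound : ∫ t in (0:ℝ)..1, ⟪gradient f (x + t • s), s⟫
      ≤ ∫ t in (0:ℝ)..1, (⟪gradient f x, s⟫ + LH * t * ‖s‖ ^ 2) := by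
    apply intervalIntegral.integral_mono_on (by norm_num)
      (hcont.intervalIntegrable 0 1)
      (((continuous_const.add ((continuous_const.mul continuous_id').mul
        continuous_const))).intervalIntegrable 0 1)
    intro t ht
    have key : ⟪gradient f (x + t • s) - gradient f x, s⟫ ≤ LH * t * ‖s‖ ^ 2 := by
      calc ⟪gradient f (x + t • s) - gradient f x, s⟫
          ≤ ‖gradient f (x + t • s) - gradient f x‖ * ‖s‖ := real_inner_le_norm _ _
        _ ≤ (LH * ‖(x + t • s) - x‖) * ‖s‖ := by
            gcongr; exact hlip _ _
        _ = LH * t * ‖s‖ ^ 2 := by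
            have : ‖(x + t • s) - x‖ = |t| * ‖s‖ := by
              simp [add_sub_cancel_left, norm_smul, Real.norm_eq_abs]
            rw [this, abs_of_nonneg ht.1]; ring
    have := key
    rw [inner_sub_left] at this
    simp only [Pi.add_apply, Pi.mul_apply]
    linarith
  have hval : ∫ t in (0:ℝ)..1, (⟪gradient f x, s⟫ + LH * t * ‖s‖ ^ 2)
      = ⟪gradient f x, s⟫ + LH / 2 * ‖s‖ ^ 2 := by
    have hc1 : Continuous fun t : ℝ => LH * t * ‖s‖ ^ 2 :=
      (continuous_const.mul continuous_id').mul continuous_const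
    rw [intervalIntegral.integral_add intervalIntegrable_const
      (hc1.intervalIntegrable 0 1)]
    simp only [intervalIntegral.integral_const, smul_eq_mul]
    have : ∫ t in (0:ℝ)..1, LH * t * ‖s‖ ^ 2
        = ∫ t in (0:ℝ)..1, (LH * ‖s‖ ^ 2) * t := by
      congr 1; ext t; ring
    rw [this, intervalIntegral.integral_const_mul, integral_id]
    ring
  rw [hxy, hx0] at hint
  rw [hval] at hbound
  linarith [hint ▸ hbound]
theorem stmt17 {n : ℕ}
    (f g : EuclideanSpace ℝ (Fin n) → ℝ)
    (hf : ContDiff ℝ 2 f)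
    (LH : ℝ) (hLH : 0 < LH)
    (hlip : ∀ u v, ‖gradient f u - gradient f v‖ ≤ LH * ‖u - v‖)
    (hg : ConvexOn ℝ Set.univ g) (hgc : Continuous g)
    (proxg : EuclideanSpace ℝ (Fin n) → EuclideanSpace ℝ (Fin n))
    (hprox : ∀ y, IsMinOn (fun u => g u + (1 / 2) * ‖u - y‖ ^ 2) Set.univ (proxg y))
    (hproxU : ∀ y u, IsMinOn (fun u => g u + (1 / 2) * ‖u - y‖ ^ 2) Set.univ u → u = proxg y)
    (G : EuclideanSpace ℝ (Fin n) → EuclideanSpace ℝ (Fin n))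
    (hG : ∀ y, G y = y - proxg (y - gradient f y))
    (xk : EuclideanSpace ℝ (Fin n)) (B : EuclideanSpace ℝ (Fin n) →L[ℝ] EuclideanSpace ℝ (Fin n))
    (hBsym : ∀ u v, ⟪B u, v⟫ = ⟪u, B v⟫)
    (hBpsd : ∀ v, 0 ≤ ⟪v, B v⟫)
    (c μ₁ μ₂ δ : ℝ) (hc : 0 < c)
    (hμ₁ : μ₁ ∈ Set.Ioc (0 : ℝ) 1) (hμ₂ : μ₂ ∈ Set.Ioc (0 : ℝ) μ₁)
    (hδ : δ ∈ Set.Icc (0 : ℝ) 1)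
    (H : EuclideanSpace ℝ (Fin n) →L[ℝ] EuclideanSpace ℝ (Fin n))
    (hH : H = B + (LH + c + μ₁ * min 1 (‖G xk‖ ^ δ)) • ContinuousLinearMap.id ℝ (EuclideanSpace ℝ (Fin n)))
    (εk xk1 : EuclideanSpace ℝ (Fin n))
    (hmin : IsMinOn (fun y => f xk + ⟪gradient f xk, y - xk⟫ + g y
        + (1 / 2) * ⟪y - xk, H (y - xk)⟫ + ⟪εk, y - xk⟫) Set.univ xk1)
    (herr : ‖εk‖ ≤ (μ₂ / 2) * min 1 (‖G xk‖ ^ δ) * ‖xk1 - xk‖) :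
    (f xk + g xk) - (f xk1 + g xk1)
        ≥ (1 / 2) * (c + (μ₁ - μ₂) * min 1 (‖G xk‖ ^ δ)) * ‖xk1 - xk‖ ^ 2 ∧
    (f xk + g xk) - (f xk1 + g xk1) ≥ (c / 2) * ‖xk1 - xk‖ ^ 2 := by
  set m := min 1 (‖G xk‖ ^ δ) with hm
  set s := xk1 - xk with hs
  have hm0 : 0 ≤ m := le_min zero_le_one (Real.rpow_nonneg (norm_nonneg _) δ)
  -- minimization inequality
  have hmin' := hmin (Set.mem_univ xk)
  simp only [Set.mem_setOf_eq, sub_self, inner_zero_right, map_zero, mul_zero,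
    add_zero] at hmin'
  -- hmin' : f xk + ⟪∇f, s⟫ + g xk1 + ½⟪s, H s⟫ + ⟪εk, s⟫ ≤ f xk + g xk
  have hHs : ⟪s, H s⟫ = ⟪s, B s⟫ + (LH + c + μ₁ * m) * ‖s‖ ^ 2 := by
    rw [hH]
    simp only [ContinuousLinearMap.add_apply, ContinuousLinearMap.coe_smul',
      Pi.smul_apply, ContinuousLinearMap.coe_id', id_eq, inner_add_right,
      real_inner_smul_right, real_inner_self_eq_norm_sq]
  have hεs : -((μ₂ / 2) * m * ‖s‖ ^ 2) ≤ ⟪εk, s⟫ := by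
    have h1 : -(‖εk‖ * ‖s‖) ≤ ⟪εk, s⟫ := neg_le_of_abs_le (abs_real_inner_le_norm _ _)
    have h2 : ‖εk‖ * ‖s‖ ≤ (μ₂ / 2) * m * ‖s‖ * ‖s‖ := by
      gcongr
    nlinarith [norm_nonneg s]
  have hdescent : f xk1 ≤ f xk + ⟪gradient f xk, s⟫ + LH / 2 * ‖s‖ ^ 2 :=
    descent_lemma f (hf.differentiable (by norm_num)) LH hLH.le hlip xk xk1
  have hB := hBpsd s
  have key : (f xk + g xk) - (f xk1 + g xk1)
      ≥ (1 / 2) * (c + (μ₁ - μ₂) * m) * ‖s‖ ^ 2 := by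
    nlinarith [hmin', hHs, hεs, hdescent, hB, sq_nonneg ‖s‖]
  refine ⟨key, ?_⟩
  have : (c / 2) * ‖s‖ ^ 2 ≤ (1 / 2) * (c + (μ₁ - μ₂) * m) * ‖s‖ ^ 2 := by
    have hμ : 0 ≤ μ₁ - μ₂ := sub_nonneg.2 hμ₂.2
    nlinarith [mul_nonneg (mul_nonneg hμ hm0) (sq_nonneg ‖s‖)]
  linarith
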